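/- Doubly-laced quantum exponential relation for q²-commuting elements (first identity of eq. (gb2) of the paper): if u, v ∈ A satisfy u·v = q²·v·u, then Ψ_{q_s}^{(1)}(u + v) = Ψ_{q_s}^{(1)}(u) · Ψ_q^{(2)}(q⁻¹·u·v) · Ψ_{q_s}^{(1)}(v) in A[[T]]. -/

import Mathlib

set_option maxHeartbeats 1600000

/-- The formal quantum dilogarithm series
`Ψ_p⁽ᵐ⁾(a) = Σ_{n≥0} (p^{n²} / ∏_{k=1}^{n}(1 − p^{2k})) aⁿ T^{mn}`
in the formal power series ring `A[[T]]`. -/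
noncomputable def Psi {K : Type*} [Field K] (A : Type*) [Ring A] [Algebra K A]
    (p : K) (m : ℕ) (a : A) : PowerSeries A :=
  PowerSeries.mk fun n =>
    if m ∣ n then
      (p ^ ((n / m) ^ 2) / ∏ k ∈ Finset.Icc 1 (n / m), (1 - p ^ (2 * k))) • a ^ (n / m)
    else 0

namespace QDLaux
variable {K : Type*} [Field K]

noncomputable def cc (p : K) (m : ℕ) : K :=
  p ^ (m ^ 2) / ∏ k ∈ Finset.Icc 1 m, (1 - p ^ (2 * k))

lemma cc_zero (p : K) : cc p 0 = 1 := by simp [cc]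

lemma cc_succ (p : K) (m : ℕ) (h : 1 - p ^ (2 * m + 2) ≠ 0) :
    cc p (m + 1) = p ^ (2 * m + 1) * cc p m / (1 - p ^ (2 * m + 2)) := by
  unfold cc
  rw [Finset.prod_Icc_succ_top (by omega : 1 ≤ m + 1)]
  have h2 : 2 * (m + 1) = 2 * m + 2 := by ring
  rw [h2]
  rcases eq_or_ne (∏ k ∈ Finset.Icc 1 m, (1 - p ^ (2 * k))) 0 with hP | hP
  · simp [hP]
  · field_simp; ring

lemma cc_pred (p : K) (hp : p ≠ 0) (m : ℕ) (h : 1 - p ^ (2 * m + 2) ≠ 0) :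
    cc p m = cc p (m + 1) * (1 - p ^ (2 * m + 2)) / p ^ (2 * m + 1) := by
  rw [cc_succ p m h]; field_simp

/-- q²-Gaussian-binomial coefficients for the `v^b u^a` ordering. -/
noncomputable def Qb (qs : K) : ℕ → ℕ → K
  | 0, 0 => 1
  | 0, _ + 1 => 0
  | n + 1, 0 => Qb qs n 0
  | n + 1, a + 1 => (qs ^ 2) ^ (2 * (n - a)) * Qb qs n a + Qb qs n (a + 1)

lemma Qb_zero (qs : K) (n : ℕ) : Qb qs n 0 = 1 := by
  induction n with
  | zero => rfl
  | succ n ih => simpa [Qb] using ih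

lemma Qb_of_gt (qs : K) : ∀ n a : ℕ, n < a → Qb qs n a = 0 := by
  intro n
  induction n with
  | zero => intro a ha; match a, ha with | a + 1, _ => rfl
  | succ n ih =>
    intro a ha
    match a, ha with
    | a + 1, ha =>
      have h1 : Qb qs n a = 0 := ih a (by omega)
      have h2 : Qb qs n (a + 1) = 0 := ih (a + 1) (by omega)
      simp [Qb, h1, h2]

/-- summand of the normal-ordered coefficient (basis `v^b u^a`). -/
noncomputable def Tg (qs : K) (a b j : ℕ) : K :=
  if j ≤ a ∧ j ≤ b then
    (qs ^ 2) ^ (j ^ 2 + 2 * ((a - j) * j + (a - j) * (b - j) + j * (b - j))) *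
      (cc qs (a - j) * (cc (qs ^ 2) j * cc qs (b - j)))
  else 0

noncomputable def SS (qs : K) (a b : ℕ) : K := ∑ j ∈ Finset.range (a + b + 1), Tg qs a b j

noncomputable def Hg (qs : K) (a b j : ℕ) : K :=
  if j + 1 ≤ a ∧ j + 1 ≤ b then
    qs ^ (4 * a * b + 2 * b - 2 * (j * (j + 1) + 1)) *
      (cc qs (a - (j + 1)) * (cc (qs ^ 2) j * cc qs (b - (j + 1))))
  else 0

section Monster

variable (qs : K) (hqs0 : qs ≠ 0) (hne : ∀ k : ℕ, 1 ≤ k → 1 - qs ^ k ≠ 0)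

include hqs0 hne in
/-- The telescoping per-index identity. -/
lemma perj (a' b' j : ℕ) :
    (1 - qs ^ (2 * (a' + b') + 4)) * Tg qs (a' + 1) (b' + 1) j
      - qs ^ (2 * (a' + b') + 3) *
          ((qs ^ 2) ^ (2 * (b' + 1)) * Tg qs a' (b' + 1) j + Tg qs (a' + 1) b' j)
    = (if j = 0 then 0 else Hg qs (a' + 1) (b' + 1) (j - 1)) - Hg qs (a' + 1) (b' + 1) j := by
  have hq2 : (qs ^ 2 : K) ≠ 0 := pow_ne_zero _ hqs0
  by_cases hja : j ≤ a' + 1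
  case neg =>
    simp only [Tg, Hg]
    split_ifs <;> first | omega | contradiction | skip
    ring
  by_cases hjb : j ≤ b' + 1
  case neg =>
    simp only [Tg, Hg]
    split_ifs <;> first | omega | contradiction | skip
    ring
  by_cases hja' : j ≤ a'
  · by_cases hjb' : j ≤ b'
    · -- main case (i)
      obtain ⟨s, rfl⟩ := Nat.exists_eq_add_of_le hja'
      obtain ⟨t, rfl⟩ := Nat.exists_eq_add_of_le hjb'
      rcases Nat.eq_zero_or_pos j with h0 | h0
      · subst h0
        simp only [Tg, Hg]
        split_ifs <;> first | omega | contradiction | skip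
        simp only [show (0:ℕ) + s + 1 - 0 = s + 1 by omega, show (0:ℕ) + t + 1 - 0 = t + 1 by omega,
          show (0:ℕ) + s + 1 - (0 + 1) = s by omega, show (0:ℕ) + t + 1 - (0 + 1) = t by omega,
          show (0:ℕ) + s - 0 = s by omega, show (0:ℕ) + t - 0 = t by omega]
        have hex : 4 * (0 + s + 1) * (0 + t + 1) + 2 * (0 + t + 1) - 2 * (0 * (0 + 1) + 1)
            = 4 * (s * t) + 4 * s + 6 * t + 4 := by
          rw [Nat.sub_eq_iff_eq_add (by nlinarith)]; ring
        rw [hex]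
        have hd1 : (1 : K) - qs ^ (2 * s + 2) ≠ 0 := hne _ (by omega)
        have hd2 : (1 : K) - qs ^ (2 * t + 2) ≠ 0 := hne _ (by omega)
        rw [cc_pred qs hqs0 s hd1, cc_pred qs hqs0 t hd2]
        field_simp
        ring
      · obtain ⟨j', rfl⟩ : ∃ j', j = j' + 1 := ⟨j - 1, by omega⟩
        simp only [Tg, Hg]
        split_ifs <;> first | omega | contradiction | skip
        simp only [show j' + 1 + s + 1 - (j' + 1) = s + 1 by omega,
          show j' + 1 + t + 1 - (j' + 1) = t + 1 by omega,
          show j' + 1 + s - (j' + 1) = s by omega, show j' + 1 + t - (j' + 1) = t by omega,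
          show j' + 1 - 1 = j' by omega,
          show j' + 1 + s + 1 - (j' + 1 + 1) = s by omega,
          show j' + 1 + t + 1 - (j' + 1 + 1) = t by omega]
        have hex1 : 4 * (j' + 1 + s + 1) * (j' + 1 + t + 1) + 2 * (j' + 1 + t + 1)
              - 2 * (j' * (j' + 1) + 1)
            = 2 * (j' * j') + 4 * (j' * s) + 4 * (j' * t) + 16 * j' + 4 * (s * t) + 8 * s
                + 10 * t + 18 := by
          rw [Nat.sub_eq_iff_eq_add (by nlinarith)]; ring
        have hex2 : 4 * (j' + 1 + s + 1) * (j' + 1 + t + 1) + 2 * (j' + 1 + t + 1)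
              - 2 * ((j' + 1) * (j' + 1 + 1) + 1)
            = 2 * (j' * j') + 4 * (j' * s) + 4 * (j' * t) + 12 * j' + 4 * (s * t) + 8 * s
                + 10 * t + 14 := by
          rw [Nat.sub_eq_iff_eq_add (by nlinarith)]; ring
        rw [hex1, hex2]
        have hd1 : (1 : K) - qs ^ (2 * s + 2) ≠ 0 := hne _ (by omega)
        have hd2 : (1 : K) - qs ^ (2 * t + 2) ≠ 0 := hne _ (by omega)
        have hd3 : (1 : K) - (qs ^ 2) ^ (2 * j' + 2) ≠ 0 := by
          rw [← pow_mul]; exact hne _ (by omega)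
        rw [cc_pred qs hqs0 s hd1, cc_pred qs hqs0 t hd2, cc_pred (qs ^ 2) hq2 j' hd3]
        field_simp
        ring
    · -- case (iii): j = b' + 1 ≤ a'
      have hj : j = b' + 1 := by omega
      subst hj
      obtain ⟨s, rfl⟩ := Nat.exists_eq_add_of_le (show b' + 1 ≤ a' from by omega)
      simp only [Tg, Hg]
      split_ifs <;> first | omega | contradiction | skip
      simp only [show b' + 1 - 1 = b' by omega,
        show b' + 1 + s + 1 - (b' + 1) = s + 1 by omega,
        show b' + 1 + s - (b' + 1) = s by omega,
        show b' + 1 - (b' + 1) = 0 by omega]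
      have hex : 4 * (b' + 1 + s + 1) * (b' + 1) + 2 * (b' + 1) - 2 * (b' * (b' + 1) + 1)
          = 2 * (b' * b') + 4 * (b' * s) + 12 * b' + 4 * s + 8 := by
        rw [Nat.sub_eq_iff_eq_add (by nlinarith)]; ring
      rw [hex]
      have hd1 : (1 : K) - qs ^ (2 * s + 2) ≠ 0 := hne _ (by omega)
      have hd3 : (1 : K) - (qs ^ 2) ^ (2 * b' + 2) ≠ 0 := by
        rw [← pow_mul]; exact hne _ (by omega)
      rw [cc_pred qs hqs0 s hd1, cc_pred (qs ^ 2) hq2 b' hd3]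
      simp only [cc_zero]
      field_simp
      ring
  · by_cases hjb' : j ≤ b'
    · -- case (ii): j = a' + 1 ≤ b'
      have hj : j = a' + 1 := by omega
      subst hj
      obtain ⟨t, rfl⟩ := Nat.exists_eq_add_of_le (show a' + 1 ≤ b' from by omega)
      simp only [Tg, Hg]
      split_ifs <;> first | omega | contradiction | skip
      simp only [show a' + 1 - 1 = a' by omega,
        show a' + 1 + t + 1 - (a' + 1) = t + 1 by omega,
        show a' + 1 + t - (a' + 1) = t by omega,
        show a' + 1 - (a' + 1) = 0 by omega]
      have hex : 4 * (a' + 1) * (a' + 1 + t + 1) + 2 * (a' + 1 + t + 1)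
            - 2 * (a' * (a' + 1) + 1)
          = 2 * (a' * a') + 4 * (a' * t) + 12 * a' + 6 * t + 10 := by
        rw [Nat.sub_eq_iff_eq_add (by nlinarith)]; ring
      rw [hex]
      have hd2 : (1 : K) - qs ^ (2 * t + 2) ≠ 0 := hne _ (by omega)
      have hd3 : (1 : K) - (qs ^ 2) ^ (2 * a' + 2) ≠ 0 := by
        rw [← pow_mul]; exact hne _ (by omega)
      rw [cc_pred qs hqs0 t hd2, cc_pred (qs ^ 2) hq2 a' hd3]
      simp only [cc_zero]
      field_simp
      ring
    · -- case (iv): j = a' + 1 = b' + 1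
      obtain rfl : a' = b' := by omega
      have hj : j = a' + 1 := by omega
      subst hj
      simp only [Tg, Hg]
      split_ifs <;> first | omega | contradiction | skip
      simp only [show a' + 1 - 1 = a' by omega,
        show a' + 1 - (a' + 1) = 0 by omega]
      have hex : 4 * (a' + 1) * (a' + 1) + 2 * (a' + 1) - 2 * (a' * (a' + 1) + 1)
          = 2 * (a' * a') + 8 * a' + 4 := by
        rw [Nat.sub_eq_iff_eq_add (by nlinarith)]; ring
      rw [hex]
      have hd3 : (1 : K) - (qs ^ 2) ^ (2 * a' + 2) ≠ 0 := by
        rw [← pow_mul]; exact hne _ (by omega)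
      rw [cc_pred (qs ^ 2) hq2 a' hd3]
      simp only [cc_zero]
      field_simp
      ring

lemma Hg_zero {qs : K} {a b j : ℕ} (h : ¬(j + 1 ≤ a ∧ j + 1 ≤ b)) : Hg qs a b j = 0 :=
  if_neg h

include hqs0 hne in
lemma dagger (a' b' : ℕ) :
    (1 - qs ^ (2 * (a' + b') + 4)) * SS qs (a' + 1) (b' + 1)
    = qs ^ (2 * (a' + b') + 3) *
        ((qs ^ 2) ^ (2 * (b' + 1)) * SS qs a' (b' + 1) + SS qs (a' + 1) b') := by
  have hpad1 : SS qs a' (b' + 1) = ∑ j ∈ Finset.range (a' + b' + 3), Tg qs a' (b' + 1) j := by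
    rw [SS]
    apply Finset.sum_subset (Finset.range_subset_range.mpr (by omega))
    intro x _ hx
    rw [Tg, if_neg]
    rw [Finset.mem_range] at hx
    omega
  have hpad2 : SS qs (a' + 1) b' = ∑ j ∈ Finset.range (a' + b' + 3), Tg qs (a' + 1) b' j := by
    rw [SS]
    apply Finset.sum_subset (Finset.range_subset_range.mpr (by omega))
    intro x _ hx
    rw [Tg, if_neg]
    rw [Finset.mem_range] at hx
    omega
  have hS : SS qs (a' + 1) (b' + 1) = ∑ j ∈ Finset.range (a' + b' + 3), Tg qs (a' + 1) (b' + 1) j := by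
    rw [SS, show a' + 1 + (b' + 1) + 1 = a' + b' + 3 by omega]
  rw [hS, hpad1, hpad2, ← sub_eq_zero]
  have hF : ∀ j ∈ Finset.range (a' + b' + 3),
      (1 - qs ^ (2 * (a' + b') + 4)) * Tg qs (a' + 1) (b' + 1) j
        - qs ^ (2 * (a' + b') + 3) *
            ((qs ^ 2) ^ (2 * (b' + 1)) * Tg qs a' (b' + 1) j + Tg qs (a' + 1) b' j)
      = (fun j => if j = 0 then (0 : K) else Hg qs (a' + 1) (b' + 1) (j - 1)) j
        - (fun j => if j = 0 then (0 : K) else Hg qs (a' + 1) (b' + 1) (j - 1)) (j + 1) := by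
    intro j _
    rw [perj qs hqs0 hne a' b' j]
    simp
  calc (1 - qs ^ (2 * (a' + b') + 4)) * ∑ j ∈ Finset.range (a' + b' + 3), Tg qs (a' + 1) (b' + 1) j
        - qs ^ (2 * (a' + b') + 3) *
          ((qs ^ 2) ^ (2 * (b' + 1)) * ∑ j ∈ Finset.range (a' + b' + 3), Tg qs a' (b' + 1) j
            + ∑ j ∈ Finset.range (a' + b' + 3), Tg qs (a' + 1) b' j)
      = ∑ j ∈ Finset.range (a' + b' + 3),
          ((1 - qs ^ (2 * (a' + b') + 4)) * Tg qs (a' + 1) (b' + 1) j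
            - qs ^ (2 * (a' + b') + 3) *
                ((qs ^ 2) ^ (2 * (b' + 1)) * Tg qs a' (b' + 1) j + Tg qs (a' + 1) b' j)) := by
        rw [Finset.mul_sum, Finset.mul_sum, ← Finset.sum_add_distrib, Finset.mul_sum,
          ← Finset.sum_sub_distrib]
    _ = ∑ j ∈ Finset.range (a' + b' + 3),
          ((fun j => if j = 0 then (0 : K) else Hg qs (a' + 1) (b' + 1) (j - 1)) j
            - (fun j => if j = 0 then (0 : K) else Hg qs (a' + 1) (b' + 1) (j - 1)) (j + 1)) :=
        Finset.sum_congr rfl hF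
    _ = 0 := by
        rw [Finset.sum_range_sub', if_pos rfl,
          if_neg (show ¬(a' + b' + 3 = 0) by omega),
          Hg_zero (show ¬(a' + b' + 3 - 1 + 1 ≤ a' + 1 ∧ a' + b' + 3 - 1 + 1 ≤ b' + 1) by omega)]
        ring

lemma Qb_diag (qs : K) (n : ℕ) : Qb qs n n = 1 := by
  induction n with
  | zero => rfl
  | succ n ih => simp [Qb, ih, Qb_of_gt qs n (n + 1) (by omega)]

lemma cc_mul_sub (p : K) (m : ℕ) (h : 1 - p ^ (2 * m + 2) ≠ 0) :
    (1 - p ^ (2 * m + 2)) * cc p (m + 1) = p ^ (2 * m + 1) * cc p m := by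
  rw [cc_succ p m h]
  field_simp

include hqs0 hne in
lemma star : ∀ n a : ℕ, a ≤ n → cc qs n * Qb qs n a = SS qs a (n - a) := by
  intro n
  induction n with
  | zero =>
    intro a ha
    obtain rfl : a = 0 := by omega
    simp [SS, Tg, cc_zero, Qb, Finset.sum_range_one]
  | succ n ih =>
    intro a ha
    match a with
    | 0 =>
      rw [Qb_zero, mul_one, SS, Nat.zero_add, Nat.sub_zero]
      rw [Finset.sum_eq_single_of_mem 0 (Finset.mem_range.mpr (by omega))]
      · rw [Tg, if_pos (by omega)]
        simp [cc_zero]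
      · intro j _ hj
        rw [Tg, if_neg (by omega)]
    | (a'' + 1) =>
      by_cases htop : a'' + 1 = n + 1
      · obtain rfl : a'' = n := by omega
        rw [Qb_diag, mul_one, Nat.sub_self, SS]
        rw [Finset.sum_eq_single_of_mem 0 (Finset.mem_range.mpr (by omega))]
        · rw [Tg, if_pos (by omega)]
          simp [cc_zero]
        · intro j _ hj
          rw [Tg, if_neg (by omega)]
      · -- main inductive step
        have ha'' : a'' + 1 ≤ n := by omega
        set b' := n - (a'' + 1) with hb'
        have hab : a'' + b' = n - 1 := by omega
        have hd : (1 : K) - qs ^ (2 * n + 2) ≠ 0 := hne _ (by omega)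
        apply mul_left_cancel₀ hd
        have e1 : n + 1 - (a'' + 1) = b' + 1 := by omega
        rw [e1]
        have hQ : Qb qs (n + 1) (a'' + 1)
            = (qs ^ 2) ^ (2 * (n - a'')) * Qb qs n a'' + Qb qs n (a'' + 1) := rfl
        rw [hQ]
        have e2 : n - a'' = b' + 1 := by omega
        rw [e2]
        calc (1 - qs ^ (2 * n + 2)) *
              (cc qs (n + 1) * ((qs ^ 2) ^ (2 * (b' + 1)) * Qb qs n a'' + Qb qs n (a'' + 1)))
            = qs ^ (2 * n + 1) *
              ((qs ^ 2) ^ (2 * (b' + 1)) * (cc qs n * Qb qs n a'')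
                + cc qs n * Qb qs n (a'' + 1)) := by
              rw [← mul_assoc, cc_mul_sub qs n hd]
              ring
          _ = qs ^ (2 * n + 1) *
              ((qs ^ 2) ^ (2 * (b' + 1)) * SS qs a'' (n - a'') + SS qs (a'' + 1) (n - (a'' + 1))) := by
              rw [ih a'' (by omega), ih (a'' + 1) ha'']
          _ = (1 - qs ^ (2 * n + 2)) * SS qs (a'' + 1) (b' + 1) := by
              have := dagger qs hqs0 hne a'' b'
              rw [show 2 * (a'' + b') + 4 = 2 * n + 2 by omega,
                show 2 * (a'' + b') + 3 = 2 * n + 1 by omega] at this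
              rw [e2, ← hb', this]


end Monster

section Series

variable {A : Type*} [Ring A] [Algebra K A] (qs : K)

section Comm

variable (u v : A) (huv : u * v = ((qs ^ 2) ^ 2) • (v * u))

include huv in
lemma u_vpow (y : ℕ) : u * v ^ y = ((qs ^ 2) ^ (2 * y)) • (v ^ y * u) := by
  induction y with
  | zero => simp
  | succ y ih =>
    rw [pow_succ, ← mul_assoc, ih, smul_mul_assoc, mul_assoc, huv, mul_smul_comm,
      smul_smul, ← mul_assoc]
    congr 1
    ring

include huv in
lemma upow_vpow (x y : ℕ) : u ^ x * v ^ y = ((qs ^ 2) ^ (2 * (x * y))) • (v ^ y * u ^ x) := by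
  induction x with
  | zero => simp
  | succ x ih =>
    rw [pow_succ, mul_assoc, u_vpow qs u v huv y, mul_smul_comm, ← mul_assoc, ih,
      smul_mul_assoc, smul_smul, pow_succ, ← mul_assoc]
    congr 1
    · ring
    · exact mul_assoc _ _ _

include huv in
lemma upow_v (x : ℕ) : u ^ x * v = ((qs ^ 2) ^ (2 * x)) • (v * u ^ x) := by
  simpa using upow_vpow qs u v huv x 1

include huv in
lemma wpow (hqs0 : qs ≠ 0) (j : ℕ) :
    (((qs ^ 2)⁻¹) • (u * v)) ^ j = ((qs ^ 2) ^ (j ^ 2)) • (v ^ j * u ^ j) := by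
  have hw : ((qs ^ 2)⁻¹) • (u * v) = (qs ^ 2) • (v * u) := by
    rw [huv, smul_smul]
    congr 1
    field_simp
  induction j with
  | zero => simp
  | succ j ih =>
    rw [pow_succ, ih, hw, smul_mul_assoc, mul_smul_comm, smul_smul,
      ← mul_assoc, mul_assoc (v ^ j), upow_v qs u v huv j, mul_smul_comm, smul_mul_assoc,
      smul_smul]
    rw [show v ^ j * (v * u ^ j) * u = v ^ (j + 1) * u ^ (j + 1) by
      rw [pow_succ, pow_succ]; noncomm_ring]
    congr 1
    ring

include huv in
lemma addpow (n : ℕ) : (u + v) ^ n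
    = ∑ a ∈ Finset.range (n + 1), Qb qs n a • (v ^ (n - a) * u ^ a) := by
  induction n with
  | zero => simp [Qb]
  | succ n ih =>
    have hu : ∀ b a : ℕ, u * (v ^ b * u ^ a) = ((qs ^ 2) ^ (2 * b)) • (v ^ b * u ^ (a + 1)) := by
      intro b a
      rw [← mul_assoc, u_vpow qs u v huv b, smul_mul_assoc, mul_assoc, ← pow_succ']
    have hv : ∀ b a : ℕ, v * (v ^ b * u ^ a) = v ^ (b + 1) * u ^ a := by
      intro b a
      rw [← mul_assoc, ← pow_succ']
    rw [pow_succ', ih, Finset.mul_sum]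
    have hsplit : ∀ a ∈ Finset.range (n + 1),
        (u + v) * (Qb qs n a • (v ^ (n - a) * u ^ a))
        = ((qs ^ 2) ^ (2 * (n - a)) * Qb qs n a) • (v ^ (n - a) * u ^ (a + 1))
          + Qb qs n a • (v ^ (n - a + 1) * u ^ a) := by
      intro a ha
      rw [mul_smul_comm, add_mul, hu, hv, smul_add, smul_smul, mul_comm (Qb qs n a)]
    rw [Finset.sum_congr rfl hsplit, Finset.sum_add_distrib]
    rw [Finset.sum_range_succ' (fun a => Qb qs (n + 1) a • (v ^ (n + 1 - a) * u ^ a)) (n + 1)]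
    have e1 : ∀ a ∈ Finset.range (n + 1),
        Qb qs (n + 1) (a + 1) • (v ^ (n + 1 - (a + 1)) * u ^ (a + 1))
        = ((qs ^ 2) ^ (2 * (n - a)) * Qb qs n a) • (v ^ (n - a) * u ^ (a + 1))
          + Qb qs n (a + 1) • (v ^ (n - a) * u ^ (a + 1)) := by
      intro a ha
      have h2 : n + 1 - (a + 1) = n - a := by omega
      rw [h2]
      show ((qs ^ 2) ^ (2 * (n - a)) * Qb qs n a + Qb qs n (a + 1))
          • (v ^ (n - a) * u ^ (a + 1)) = _
      rw [add_smul]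
    rw [Finset.sum_congr rfl e1, Finset.sum_add_distrib, add_assoc]
    congr 1
    -- ΣB = ΣC + g0
    have e2 := Finset.sum_range_succ' (fun a => Qb qs n a • (v ^ (n + 1 - a) * u ^ a)) (n + 1)
    rw [Finset.sum_range_succ] at e2
    rw [Qb_of_gt qs n (n + 1) (by omega), zero_smul, add_zero] at e2
    have e3 : ∑ a ∈ Finset.range (n + 1), Qb qs n a • (v ^ (n - a + 1) * u ^ a)
        = ∑ a ∈ Finset.range (n + 1), Qb qs n a • (v ^ (n + 1 - a) * u ^ a) := by
      apply Finset.sum_congr rfl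
      intro a ha
      rw [Finset.mem_range] at ha
      rw [show n - a + 1 = n + 1 - a by omega]
    rw [e3, e2]
    congr 1
    apply Finset.sum_congr rfl
    intro a ha
    rw [show n + 1 - (a + 1) = n - a by omega]

lemma coeff_Psi_one (x : A) (n : ℕ) :
    (PowerSeries.coeff n) (Psi A qs 1 x) = cc qs n • x ^ n := by
  rw [Psi, PowerSeries.coeff_mk, if_pos (one_dvd n), Nat.div_one, cc]

lemma coeff_Psi_two_even (p : K) (x : A) (j : ℕ) :
    (PowerSeries.coeff (2 * j)) (Psi A p 2 x) = cc p j • x ^ j := by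
  rw [Psi, PowerSeries.coeff_mk, if_pos ⟨j, rfl⟩,
    Nat.mul_div_cancel_left j (by norm_num : (0:ℕ) < 2), cc]

lemma coeff_Psi_two_odd (p : K) (x : A) (m : ℕ) (h : ¬ (2 ∣ m)) :
    (PowerSeries.coeff m) (Psi A p 2 x) = 0 := by
  rw [Psi, PowerSeries.coeff_mk, if_neg h]

/-- intermediate normal-ordered form of `Ψ(u)·Ψ⁽²⁾(w)`. -/
noncomputable def M12 (qs : K) (u v : A) : PowerSeries A :=
  PowerSeries.mk fun m => ∑ j ∈ Finset.range (m + 1),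
    if 2 * j ≤ m then
      (cc qs (m - 2 * j) * cc (qs ^ 2) j * (qs ^ 2) ^ (j ^ 2 + 2 * ((m - 2 * j) * j)))
        • (v ^ j * u ^ (m - j))
    else 0

include huv in
lemma P1P2 (hqs0 : qs ≠ 0) :
    Psi A qs 1 u * Psi A (qs ^ 2) 2 (((qs ^ 2)⁻¹) • (u * v)) = M12 qs u v := by
  have key : ∀ i c : ℕ,
      (PowerSeries.coeff i) (Psi A qs 1 u) *
        (PowerSeries.coeff (2 * c)) (Psi A (qs ^ 2) 2 (((qs ^ 2)⁻¹) • (u * v)))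
      = (cc qs i * cc (qs ^ 2) c * (qs ^ 2) ^ (c ^ 2 + 2 * (i * c)))
          • (v ^ c * u ^ (i + c)) := by
    intro i c
    rw [coeff_Psi_one, coeff_Psi_two_even, wpow qs u v huv hqs0 c]
    rw [smul_smul, smul_mul_assoc, mul_smul_comm, smul_smul]
    rw [← mul_assoc (u ^ i), upow_vpow qs u v huv i c, smul_mul_assoc, smul_smul,
      mul_assoc (v ^ c), ← pow_add]
    congr 1
    ring
  ext m
  rw [PowerSeries.coeff_mul, M12, PowerSeries.coeff_mk]
  have hvanish : ∀ p ∈ Finset.HasAntidiagonal.antidiagonal m,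
      ((PowerSeries.coeff p.1) (Psi A qs 1 u) *
        (PowerSeries.coeff p.2) (Psi A (qs ^ 2) 2 (((qs ^ 2)⁻¹) • (u * v)))) ≠ 0 →
      (2 ∣ p.2) := by
    intro p hp hne2
    by_contra hodd
    rw [coeff_Psi_two_odd _ _ _ hodd, mul_zero] at hne2
    exact hne2 rfl
  rw [← Finset.sum_filter_of_ne hvanish, ← Finset.sum_filter]
  apply Finset.sum_nbij' (fun p => p.2 / 2) (fun j => (m - 2 * j, 2 * j))
  · intro p hp
    rw [Finset.mem_filter, Finset.HasAntidiagonal.mem_antidiagonal] at hp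
    obtain ⟨c, hc⟩ := hp.2
    rw [Finset.mem_filter, Finset.mem_range]
    omega
  · intro j hj
    rw [Finset.mem_filter, Finset.mem_range] at hj
    rw [Finset.mem_filter, Finset.HasAntidiagonal.mem_antidiagonal]
    exact ⟨by omega, ⟨j, by omega⟩⟩
  · intro p hp
    rw [Finset.mem_filter, Finset.HasAntidiagonal.mem_antidiagonal] at hp
    obtain ⟨c, hc⟩ := hp.2
    have h1 : p.2 / 2 = c := by omega
    rw [h1]
    ext <;> simp <;> omega
  · intro j hj
    rw [Finset.mem_filter, Finset.mem_range] at hj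
    simp
  · intro p hp
    rw [Finset.mem_filter, Finset.HasAntidiagonal.mem_antidiagonal] at hp
    obtain ⟨c, hc⟩ := hp.2
    have h1 : p.2 / 2 = c := by omega
    have h2 : p.2 = 2 * c := by omega
    rw [h1, h2, key p.1 c]
    try rw [show m - 2 * c = p.1 by omega]
    try rw [show m - c = p.1 + c by omega]

include huv in
lemma coeff_M12_P3 (n : ℕ) :
    (PowerSeries.coeff n) (M12 qs u v * Psi A qs 1 v)
    = ∑ a ∈ Finset.range (n + 1), SS qs a (n - a) • (v ^ (n - a) * u ^ a) := by
  have lhs1 : (PowerSeries.coeff n) (M12 qs u v * Psi A qs 1 v)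
      = ∑ x ∈ Finset.range (n + 1), ∑ j ∈ Finset.range (n + 1),
          (if 2 * j ≤ x then
            (cc qs (x - 2 * j) * cc (qs ^ 2) j * cc qs (n - x) *
              (qs ^ 2) ^ (j ^ 2 + 2 * ((x - 2 * j) * j) + 2 * ((x - j) * (n - x))))
              • (v ^ (j + (n - x)) * u ^ (x - j))
          else 0) := by
    rw [PowerSeries.coeff_mul, Finset.Nat.sum_antidiagonal_eq_sum_range_succ_mk]
    apply Finset.sum_congr rfl
    intro x hx
    rw [Finset.mem_range] at hx
    dsimp only
    rw [M12, PowerSeries.coeff_mk, coeff_Psi_one, Finset.sum_mul]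
    rw [Finset.sum_subset (Finset.range_subset_range.mpr (show x + 1 ≤ n + 1 by omega))
      (by
        intro j hj hj2
        rw [Finset.mem_range] at hj hj2
        rw [if_neg (by omega), zero_mul])]
    apply Finset.sum_congr rfl
    intro j hj
    by_cases hc : 2 * j ≤ x
    · rw [if_pos hc, if_pos hc, smul_mul_assoc, mul_smul_comm, smul_smul]
      rw [mul_assoc (v ^ j), upow_vpow qs u v huv (x - j) (n - x), mul_smul_comm, smul_smul,
        ← mul_assoc (v ^ j), ← pow_add]
      rw [show j + (n - x) = n - x + j by omega]  -- align v exponent? keep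
      congr 1
      ring
    · rw [if_neg hc, if_neg hc, zero_mul]
  have rhs1 : (∑ a ∈ Finset.range (n + 1), SS qs a (n - a) • (v ^ (n - a) * u ^ a))
      = ∑ a ∈ Finset.range (n + 1), ∑ j ∈ Finset.range (n + 1),
          (if j ≤ a ∧ j ≤ n - a then
            ((qs ^ 2) ^ (j ^ 2 + 2 * ((a - j) * j + (a - j) * (n - a - j) + j * (n - a - j))) *
              (cc qs (a - j) * (cc (qs ^ 2) j * cc qs (n - a - j))))
              • (v ^ (n - a) * u ^ a)
          else 0) := by
    apply Finset.sum_congr rfl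
    intro a ha
    rw [Finset.mem_range] at ha
    rw [SS, show a + (n - a) + 1 = n + 1 by omega, Finset.sum_smul]
    apply Finset.sum_congr rfl
    intro j hj
    rw [Tg, ite_smul, zero_smul]
  rw [lhs1, rhs1, ← Finset.sum_product', ← Finset.sum_product',
    ← Finset.sum_filter, ← Finset.sum_filter]
  apply Finset.sum_nbij' (fun p => (p.1 - p.2, p.2)) (fun p => (p.1 + p.2, p.2))
  · intro p hp
    rw [Finset.mem_filter, Finset.mem_product, Finset.mem_range, Finset.mem_range] at hp
    rw [Finset.mem_filter, Finset.mem_product, Finset.mem_range, Finset.mem_range]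
    refine ⟨⟨by omega, by omega⟩, by omega, by omega⟩
  · intro p hp
    rw [Finset.mem_filter, Finset.mem_product, Finset.mem_range, Finset.mem_range] at hp
    rw [Finset.mem_filter, Finset.mem_product, Finset.mem_range, Finset.mem_range]
    refine ⟨⟨by omega, by omega⟩, by omega⟩
  · intro p hp
    rw [Finset.mem_filter, Finset.mem_product, Finset.mem_range, Finset.mem_range] at hp
    ext <;> simp <;> omega
  · intro p hp
    rw [Finset.mem_filter, Finset.mem_product, Finset.mem_range, Finset.mem_range] at hp
    ext <;> simp <;> omega
  · intro p hp
    rw [Finset.mem_filter, Finset.mem_product, Finset.mem_range, Finset.mem_range] at hp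
    obtain ⟨⟨hx, hj⟩, hc⟩ := hp
    obtain ⟨x, j⟩ := p
    simp only at hx hj hc ⊢
    obtain ⟨i, rfl⟩ := Nat.exists_eq_add_of_le hc
    obtain ⟨k, rfl⟩ := Nat.exists_eq_add_of_le (show 2 * j + i ≤ n by omega)
    simp only [show 2 * j + i - 2 * j = i by omega,
      show 2 * j + i - j = j + i by omega,
      show 2 * j + i + k - (2 * j + i) = k by omega,
      show 2 * j + i + k - (j + i) = j + k by omega,
      show j + i - j = i by omega,
      show j + k - j = k by omega]
    congr 1
    ring

end Comm

end Series

end QDLaux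

/-- doubly-laced quantum exponential relation for q²-commuting
elements: with `q = q_s²`, if `u·v = q²·v·u` then
`Ψ_{q_s}⁽¹⁾(u + v) = Ψ_{q_s}⁽¹⁾(u)·Ψ_q⁽²⁾(q⁻¹·u·v)·Ψ_{q_s}⁽¹⁾(v)` in `A[[T]]`. -/
theorem quantum_exponential_doubly_laced_qsq_commuting
    {K : Type*} [Field K] (qs : K) (hqs0 : qs ≠ 0) (hqs : ∀ n : ℕ, 1 ≤ n → qs ^ n ≠ 1)
    (q : K) (hq : q = qs ^ 2)
    {A : Type*} [Ring A] [Algebra K A]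
    (u v : A) (huv : u * v = (q ^ 2) • (v * u)) :
    Psi A qs 1 (u + v) = Psi A qs 1 u * Psi A q 2 (q⁻¹ • (u * v)) * Psi A qs 1 v := by
  subst hq
  have hne : ∀ k : ℕ, 1 ≤ k → 1 - qs ^ k ≠ 0 := by
    intro k hk h
    exact hqs k hk (sub_eq_zero.mp h).symm
  apply PowerSeries.ext
  intro n
  rw [QDLaux.P1P2 qs u v huv hqs0, QDLaux.coeff_M12_P3 qs u v huv n,
    QDLaux.coeff_Psi_one, QDLaux.addpow qs u v huv n, Finset.smul_sum]
  apply Finset.sum_congr rfl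
  intro a ha
  rw [Finset.mem_range] at ha
  rw [smul_smul, QDLaux.star qs hqs0 hne n a (by omega)]
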